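/- For every r ≥ 0, all î, ĵ ∈ {3, …, n+2} and all b, c, f_1, …, f_r ∈ {1, …, n+4}, the function R^î_{ĵ, b, c; f_1; …; f_r} does not depend on the coordinate x^{n+4}: ∂_{n+4} R^î_{ĵ, b, c; f_1; …; f_r} = 0 identically on ℝ^{n+4}. -/
import Mathlib


namespace HolPaper

open Matrix

/-- Points of `ℝ^{n+4}`, with coordinates indexed by `Fin (n+4)`.
The paper's index `1` is `p1`, `2` is `p2`, `î ∈ {3,…,n+2}` is `ehat i` for `i : Fin n`,
`n+3` is `q1` and `n+4` is `q2`. -/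
abbrev Pt (n : ℕ) := Fin (n + 4) → ℝ

def p1 (n : ℕ) : Fin (n + 4) := ⟨0, by omega⟩
def p2 (n : ℕ) : Fin (n + 4) := ⟨1, by omega⟩
def ehat {n : ℕ} (i : Fin n) : Fin (n + 4) := ⟨i.1 + 2, by have := i.isLt; omega⟩
def q1 (n : ℕ) : Fin (n + 4) := ⟨n + 2, by omega⟩
def q2 (n : ℕ) : Fin (n + 4) := ⟨n + 3, by omega⟩

noncomputable section

variable {n N : ℕ}

/-- `u^î(x) = Σ_ĵ Σ_α (A_α)_{î-2,ĵ-2} x^ĵ (x^{n+3})^α`. -/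
def u (A : Fin N → Matrix (Fin n) (Fin n) ℝ) (i : Fin n) (x : Pt n) : ℝ :=
  ∑ j : Fin n, ∑ α : Fin N, A α i j * x (ehat j) * x (q1 n) ^ (α.1 + 1)

/-- `F(x) = Σ_î (x^î)²`. -/
def Fq (n : ℕ) (x : Pt n) : ℝ := ∑ i : Fin n, x (ehat i) ^ 2

/-- The Gram matrix `G(x)` of the metric. -/
def Gmet (A : Fin N → Matrix (Fin n) (Fin n) ℝ) (x : Pt n) :
    Matrix (Fin (n + 4)) (Fin (n + 4)) ℝ := fun a b =>
  (if (a = p1 n ∧ b = q1 n) ∨ (a = q1 n ∧ b = p1 n) then (1 : ℝ) else 0)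
  + (if (a = p2 n ∧ b = q2 n) ∨ (a = q2 n ∧ b = p2 n) then (1 : ℝ) else 0)
  + (∑ i : Fin n, if a = ehat i ∧ b = ehat i then (1 : ℝ) else 0)
  + (∑ i : Fin n, if (a = ehat i ∧ b = q2 n) ∨ (a = q2 n ∧ b = ehat i) then u A i x else 0)
  + (if (a = q1 n ∧ b = q1 n) ∨ (a = q2 n ∧ b = q2 n) then Fq n x else 0)

/-- Partial derivative `∂_b f` of a function on `ℝ^{n+4}`. -/
def pd (b : Fin (n + 4)) (f : Pt n → ℝ) (x : Pt n) : ℝ :=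
  fderiv ℝ f x (Pi.single b 1)

/-- Christoffel symbols
`Γ^a_{bc} = ½ Σ_d G^{ad} (∂_b G_{dc} + ∂_c G_{bd} − ∂_d G_{bc})`. -/
def Γchr (A : Fin N → Matrix (Fin n) (Fin n) ℝ) (a b c : Fin (n + 4)) (x : Pt n) : ℝ :=
  (1 / 2) * ∑ d : Fin (n + 4), (Gmet A x)⁻¹ a d *
    (pd b (fun y => Gmet A y d c) x + pd c (fun y => Gmet A y b d) x
      - pd d (fun y => Gmet A y b c) x)

/-- Curvature components
`R^a_{b,c,d} = ∂_c Γ^a_{db} − ∂_d Γ^a_{cb} + Σ_e (Γ^a_{ce} Γ^e_{db} − Γ^a_{de} Γ^e_{cb})`. -/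
def Rcurv (A : Fin N → Matrix (Fin n) (Fin n) ℝ) (a b c d : Fin (n + 4)) (x : Pt n) : ℝ :=
  pd c (Γchr A a d b) x - pd d (Γchr A a c b) x
  + ∑ e : Fin (n + 4), (Γchr A a c e x * Γchr A e d b x - Γchr A a d e x * Γchr A e c b x)

/-- Auxiliary recursion for iterated covariant derivatives of the curvature; the list of
differentiation indices is stored in *reverse* order (most recent derivative first). -/
def covRAux (A : Fin N → Matrix (Fin n) (Fin n) ℝ) :
    Fin (n + 4) → Fin (n + 4) → Fin (n + 4) → Fin (n + 4) → List (Fin (n + 4)) → Pt n → ℝ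
  | a, b, c, d, [], x => Rcurv A a b c d x
  | a, b, c, d, f :: fs, x =>
      pd f (covRAux A a b c d fs) x
      + ∑ l : Fin (n + 4), Γchr A a f l x * covRAux A l b c d fs x
      - ∑ l : Fin (n + 4), Γchr A l f b x * covRAux A a l c d fs x
      - ∑ l : Fin (n + 4), Γchr A l f c x * covRAux A a b l d fs x
      - ∑ l : Fin (n + 4), Γchr A l f d x * covRAux A a b c l fs x
      - ∑ s : Fin fs.length, ∑ l : Fin (n + 4),
          Γchr A l f (fs.get s) x * covRAux A a b c d (fs.set s l) x
  termination_by a b c d fs => fs.length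
  decreasing_by all_goals simp [List.length_set]

/-- `covR A a b c d [f_1, …, f_r] x` is the component `R^a_{b,c,d;f_1;…;f_r}(x)` of the
`r`-th covariant derivative of the curvature tensor (indices in natural order). -/
def covR (A : Fin N → Matrix (Fin n) (Fin n) ℝ) (a b c d : Fin (n + 4))
    (fs : List (Fin (n + 4))) (x : Pt n) : ℝ :=
  covRAux A a b c d fs.reverse x



/-! ### Auxiliary lemmas: everything built from the metric is invariant under
translations in the `q2` direction, since the metric does not involve `x (q2 n)`. -/

private lemma diff_shift {f : Pt n → ℝ} {v : Pt n} (hf : ∀ y, f (y + v) = f y)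
    {x : Pt n} (h : DifferentiableAt ℝ f (x + v)) : DifferentiableAt ℝ f x := by
  have h2 : DifferentiableAt ℝ (fun z : Pt n => f (z + v)) x :=
    h.comp x ((differentiableAt_id).add_const v)
  exact (funext hf : (fun z : Pt n => f (z + v)) = f) ▸ h2

private lemma fderiv_shift {f : Pt n → ℝ} {v : Pt n} (hf : ∀ y, f (y + v) = f y)
    (x : Pt n) : fderiv ℝ f (x + v) = fderiv ℝ f x := by
  by_cases h : DifferentiableAt ℝ f (x + v)
  · have ht : HasFDerivAt (fun z : Pt n => z + v) (ContinuousLinearMap.id ℝ (Pt n)) x :=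
      (hasFDerivAt_id x).add_const v
    have h2 : HasFDerivAt (fun z : Pt n => f (z + v))
        ((fderiv ℝ f (x + v)).comp (ContinuousLinearMap.id ℝ (Pt n))) x :=
      h.hasFDerivAt.comp x ht
    rw [ContinuousLinearMap.comp_id] at h2
    rw [(funext hf : (fun z : Pt n => f (z + v)) = f)] at h2
    exact h2.fderiv.symm
  · have hf' : ∀ y, f (y + -v) = f y := by
      intro y
      have h' := hf (y + -v)
      rw [neg_add_cancel_right] at h'
      exact h'.symm
    have h' : ¬ DifferentiableAt ℝ f x := by
      intro hx
      exact h (diff_shift hf' (by rwa [add_neg_cancel_right]))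
    rw [fderiv_zero_of_not_differentiableAt h, fderiv_zero_of_not_differentiableAt h']

private lemma pd_shift {f : Pt n → ℝ} {v : Pt n} (hf : ∀ y, f (y + v) = f y)
    (b : Fin (n + 4)) (x : Pt n) : pd b f (x + v) = pd b f x := by
  unfold pd; rw [fderiv_shift hf]

private lemma pd_q2_zero {f : Pt n → ℝ}
    (hf : ∀ (y : Pt n) (s : ℝ), f (y + s • (Pi.single (q2 n) (1 : ℝ) : Pt n)) = f y)
    (x : Pt n) : pd (q2 n) f x = 0 := by
  unfold pd
  by_cases h : DifferentiableAt ℝ f x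
  · set w : Pt n := (Pi.single (q2 n) (1 : ℝ) : Pt n) with hw
    have hl : HasDerivAt (fun t : ℝ => x + t • w) w 0 := by
      simpa using ((hasDerivAt_id (0 : ℝ)).smul_const w).const_add x
    have h0 : x + (0 : ℝ) • w = x := by simp
    have hfd : HasFDerivAt f (fderiv ℝ f x) (x + (0 : ℝ) • w) := by
      rw [h0]; exact h.hasFDerivAt
    have hc : HasDerivAt (fun t : ℝ => f (x + t • w)) (fderiv ℝ f x w) 0 :=
      hfd.comp_hasDerivAt 0 hl
    have hconst : (fun t : ℝ => f (x + t • w)) = fun _ => f x :=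
      funext fun t => hf x t
    rw [hconst] at hc
    exact hc.unique (hasDerivAt_const 0 (f x))
  · rw [fderiv_zero_of_not_differentiableAt h]; rfl

private lemma ehat_ne_q2 (j : Fin n) : ehat j ≠ q2 n := by
  have := j.isLt
  simp only [ehat, q2, Ne, Fin.ext_iff]
  omega

private lemma q1_ne_q2 : q1 n ≠ q2 n := by
  simp only [q1, q2, Ne, Fin.ext_iff]
  omega

private lemma coord_shift (x : Pt n) (s : ℝ) {c : Fin (n + 4)} (hc : c ≠ q2 n) :
    (x + s • (Pi.single (q2 n) (1 : ℝ) : Pt n)) c = x c := by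
  simp [Pi.single_eq_of_ne hc]

private lemma u_shift (A : Fin N → Matrix (Fin n) (Fin n) ℝ) (i : Fin n)
    (x : Pt n) (s : ℝ) : u A i (x + s • (Pi.single (q2 n) (1 : ℝ) : Pt n)) = u A i x := by
  unfold u
  refine Finset.sum_congr rfl fun j _ => Finset.sum_congr rfl fun α _ => ?_
  rw [coord_shift x s (ehat_ne_q2 j), coord_shift x s q1_ne_q2]

private lemma Fq_shift (x : Pt n) (s : ℝ) :
    Fq n (x + s • (Pi.single (q2 n) (1 : ℝ) : Pt n)) = Fq n x := by
  unfold Fq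
  refine Finset.sum_congr rfl fun i _ => ?_
  rw [coord_shift x s (ehat_ne_q2 i)]

private lemma Gmet_shift (A : Fin N → Matrix (Fin n) (Fin n) ℝ) (x : Pt n) (s : ℝ) :
    Gmet A (x + s • (Pi.single (q2 n) (1 : ℝ) : Pt n)) = Gmet A x := by
  funext a b
  simp only [Gmet, u_shift, Fq_shift]

private lemma Γ_shift (A : Fin N → Matrix (Fin n) (Fin n) ℝ) (a b c : Fin (n + 4))
    (x : Pt n) (s : ℝ) :
    Γchr A a b c (x + s • (Pi.single (q2 n) (1 : ℝ) : Pt n)) = Γchr A a b c x := by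
  unfold Γchr
  rw [Gmet_shift]
  refine congrArg _ (Finset.sum_congr rfl fun d _ => ?_)
  have h1 := pd_shift (f := fun y => Gmet A y d c)
    (v := s • (Pi.single (q2 n) (1 : ℝ) : Pt n))
    (fun y => congrFun (congrFun (Gmet_shift A y s) d) c) b x
  have h2 := pd_shift (f := fun y => Gmet A y b d)
    (v := s • (Pi.single (q2 n) (1 : ℝ) : Pt n))
    (fun y => congrFun (congrFun (Gmet_shift A y s) b) d) c x
  have h3 := pd_shift (f := fun y => Gmet A y b c)
    (v := s • (Pi.single (q2 n) (1 : ℝ) : Pt n))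
    (fun y => congrFun (congrFun (Gmet_shift A y s) b) c) d x
  rw [h1, h2, h3]

private lemma Rcurv_shift (A : Fin N → Matrix (Fin n) (Fin n) ℝ)
    (a b c d : Fin (n + 4)) (x : Pt n) (s : ℝ) :
    Rcurv A a b c d (x + s • (Pi.single (q2 n) (1 : ℝ) : Pt n)) = Rcurv A a b c d x := by
  have hΓ : ∀ (a b c : Fin (n + 4)) (y : Pt n),
      Γchr A a b c (y + s • (Pi.single (q2 n) (1 : ℝ) : Pt n)) = Γchr A a b c y :=
    fun a b c y => Γ_shift A a b c y s
  have hp : ∀ (a b c e : Fin (n + 4)),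
      pd e (Γchr A a b c) (x + s • (Pi.single (q2 n) (1 : ℝ) : Pt n)) = pd e (Γchr A a b c) x :=
    fun a b c e => pd_shift (fun y => hΓ a b c y) e x
  unfold Rcurv
  simp only [hp, hΓ]

private lemma covRAux_shift (A : Fin N → Matrix (Fin n) (Fin n) ℝ) :
    ∀ (m : ℕ) (fs : List (Fin (n + 4))), fs.length ≤ m →
      ∀ (a b c d : Fin (n + 4)) (x : Pt n) (s : ℝ),
      covRAux A a b c d fs (x + s • (Pi.single (q2 n) (1 : ℝ) : Pt n)) = covRAux A a b c d fs x := by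
  intro m
  induction m with
  | zero =>
    intro fs hfs a b c d x s
    obtain rfl : fs = [] := List.length_eq_zero_iff.mp (Nat.le_zero.mp hfs)
    simp only [covRAux]
    exact Rcurv_shift A a b c d x s
  | succ m ih =>
    intro fs hfs a b c d x s
    match fs with
    | [] =>
      simp only [covRAux]
      exact Rcurv_shift A a b c d x s
    | f :: fs' =>
      have hlen : fs'.length ≤ m := by
        simpa using Nat.succ_le_succ_iff.mp (by simpa [List.length_cons] using hfs)
      have h1 : ∀ (a b c d : Fin (n + 4)) (y : Pt n),
          covRAux A a b c d fs' (y + s • (Pi.single (q2 n) (1 : ℝ) : Pt n))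
            = covRAux A a b c d fs' y :=
        fun a b c d y => ih fs' hlen a b c d y s
      have h2 : ∀ (t : Fin fs'.length) (l a b c d : Fin (n + 4)),
          covRAux A a b c d (fs'.set t l) (x + s • (Pi.single (q2 n) (1 : ℝ) : Pt n))
            = covRAux A a b c d (fs'.set t l) x :=
        fun t l a b c d => ih _ (by simpa [List.length_set] using hlen) a b c d x s
      have hΓ : ∀ (a b c : Fin (n + 4)),
          Γchr A a b c (x + s • (Pi.single (q2 n) (1 : ℝ) : Pt n)) = Γchr A a b c x :=
        fun a b c => Γ_shift A a b c x s
      have hp : ∀ (a b c d f' : Fin (n + 4)),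
          pd f' (covRAux A a b c d fs') (x + s • (Pi.single (q2 n) (1 : ℝ) : Pt n))
            = pd f' (covRAux A a b c d fs') x :=
        fun a b c d f' => pd_shift (fun y => h1 a b c d y) f' x
      simp only [covRAux, hp, hΓ, h1, h2]

/-- The functions `R^î_{ĵ,b,c;f_1;…;f_r}` do not depend on the coordinate `x^{n+4}`. -/
theorem statement11 (n N : ℕ) (hn : 1 ≤ n) (hN : 1 ≤ N)
    (A : Fin N → Matrix (Fin n) (Fin n) ℝ) (hA : ∀ α, (A α)ᵀ = -A α) :
    ∀ (fs : List (Fin (n + 4))) (b c : Fin (n + 4)) (i j : Fin n) (x : Pt n),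
      pd (q2 n) (covR A (ehat i) (ehat j) b c fs) x = 0 := by
  intro fs b c i j x
  exact pd_q2_zero
    (fun y s => covRAux_shift A fs.reverse.length fs.reverse le_rfl _ _ _ _ y s) x

end
end HolPaper
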